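/- Consider the window obstacle model on [−L/2, L/2] with intensity λ > 0 and rate μ > 0: N is a Poisson random variable with mean λL; (Y_j)_{j≥1} are i.i.d. uniform on [−L/2, L/2]; (V_j)_{j≥1} and (W_j)_{j≥1} are i.i.d. exponential with rate μ; and N, (Y_j), (V_j), (W_j) are mutually independent; obstacle j is the segment [Y_j − V_j, Y_j + W_j]. Let n ≥ 2 and x̂₁ < … < x̂ₙ be real numbers, and define g : ℝ → ℝ by g(y) = 1 − e^{−μ(x̂₁ − y)} for y ≤ x̂₁; g(y) = (1 − e^{−μ(y − x̂_{k−1})})(1 − e^{−μ(x̂_k − y)}) for x̂_{k−1} < y < x̂_k (k = 2, …, n); and g(y) = 1 − e^{−μ(y − x̂ₙ)} for y ≥ x̂ₙ. Then the probability that no obstacle j ≤ N covers any of the points x̂₁, …, x̂ₙ equals exp(−λ ∫_{−L/2}^{L/2} (1 − g(y)) dy). -/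

import Mathlib

open MeasureTheory ProbabilityTheory

/-- Codomain family for the joint family consisting of the Poisson count `N`
(index `none`) and the real random variables `Y j`, `V j`, `W j` (indices `some (j, 0)`,
`some (j, 1)`, `some (j, 2)`). -/
def WindowObstacleFam : Option (ℕ × Fin 3) → Type
  | none => ℕ
  | some _ => ℝ

instance : ∀ i, MeasurableSpace (WindowObstacleFam i)
  | none => inferInstanceAs (MeasurableSpace ℕ)
  | some _ => inferInstanceAs (MeasurableSpace ℝ)

/-- The joint family `{N, Y 0, V 0, W 0, Y 1, V 1, W 1, …}`. -/
def windowObstacleFun {Ω : Type*} (N : Ω → ℕ) (Y V W : ℕ → Ω → ℝ) :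
    ∀ i : Option (ℕ × Fin 3), Ω → WindowObstacleFam i
  | none => N
  | some (j, k) => ![Y j, V j, W j] k

section Aux

open Set

/-- value of the exponential measure on `Iio`. -/
lemma expMeasure_Iio {μ : ℝ} (hμ : 0 < μ) (c : ℝ) :
    expMeasure μ (Set.Iio c)
      = ENNReal.ofReal (if 0 ≤ c then 1 - Real.exp (-(μ * c)) else 0) := by
  have hIic : expMeasure μ (Set.Iic c)
      = ENNReal.ofReal (if 0 ≤ c then 1 - Real.exp (-(μ * c)) else 0) := by
    have h : expMeasure μ (Set.Iic c) = ∫⁻ y in Set.Iic c, exponentialPDF μ y := by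
      rw [expMeasure, gammaMeasure, withDensity_apply _ measurableSet_Iic]; rfl
    rw [h, lintegral_exponentialPDF_eq_antiDeriv hμ]
  have hsing : expMeasure μ {c} = 0 := by
    rw [expMeasure, gammaMeasure, withDensity_apply _ (measurableSet_singleton c)]
    exact setLIntegral_measure_zero _ _ (measure_singleton c)
  have h1 : expMeasure μ (Set.Iic c) = expMeasure μ (Set.Iio c) + expMeasure μ {c} := by
    rw [← Set.Iio_union_right, measure_union (by simp) (measurableSet_singleton c)]
  rw [h1, hsing, add_zero] at hIic
  exact hIic

lemma exp_neg_le_one {μ a : ℝ} (hμ : 0 < μ) (ha : 0 ≤ a) : Real.exp (-(μ * a)) ≤ 1 := by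
  rw [← Real.exp_zero]
  exact Real.exp_le_exp.2 (by nlinarith)

end Aux

/-- Window obstacle model on `[−L/2, L/2]` with intensity `λ` and rate `μ`.
Let `n ≥ 2`, `x̂ 0 < … < x̂ (n−1)`, and let `g` be the piecewise `n`-point non-blocking
probability function. Then the probability that no obstacle `j < N` covers any of the points
`x̂ 0, …, x̂ (n−1)` equals `exp(−λ ∫_{−L/2}^{L/2} (1 − g(y)) dy)`. -/
theorem window_LOS_prob_n_points
    {Ω : Type*} [MeasurableSpace Ω] (P : Measure Ω) [IsProbabilityMeasure P]
    (lam μ L : ℝ) (hlam : 0 < lam) (hμ : 0 < μ) (hL : 0 < L)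
    (N : Ω → ℕ) (Y V W : ℕ → Ω → ℝ)
    (hNmeas : Measurable N) (hYmeas : ∀ j, Measurable (Y j))
    (hVmeas : ∀ j, Measurable (V j)) (hWmeas : ∀ j, Measurable (W j))
    (hN : Measure.map N P = poissonMeasure (lam * L).toNNReal)
    (hY : ∀ j, Measure.map (Y j) P
        = (ENNReal.ofReal L)⁻¹ • (volume.restrict (Set.Icc (-(L / 2)) (L / 2))))
    (hV : ∀ j, Measure.map (V j) P = expMeasure μ)
    (hW : ∀ j, Measure.map (W j) P = expMeasure μ)
    (hindep : iIndepFun (windowObstacleFun N Y V W) P)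
    (n : ℕ) (hn : 2 ≤ n) (xh : ℕ → ℝ)
    (hmono : ∀ i j, i < j → j < n → xh i < xh j)
    (g : ℝ → ℝ)
    (hg1 : ∀ y, y ≤ xh 0 → g y = 1 - Real.exp (-(μ * (xh 0 - y))))
    (hg2 : ∀ k, 1 ≤ k → k < n → ∀ y, xh (k - 1) < y → y < xh k →
        g y = (1 - Real.exp (-(μ * (y - xh (k - 1)))))
              * (1 - Real.exp (-(μ * (xh k - y)))))
    (hg3 : ∀ y, xh (n - 1) ≤ y → g y = 1 - Real.exp (-(μ * (y - xh (n - 1))))) :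
    P {ω | ∀ j < N ω, ∀ i < n,
          ¬ (Y j ω - V j ω ≤ xh i ∧ xh i ≤ Y j ω + W j ω)}
      = ENNReal.ofReal (Real.exp (-(lam * ∫ y in -(L / 2)..(L / 2), (1 - g y)))) := by
  classical
  set ρ : Measure ℝ := expMeasure μ with hρdef
  haveI hρprob : IsProbabilityMeasure ρ := isProbabilityMeasure_expMeasure hμ
  have hIio : ∀ c : ℝ, 0 ≤ c → ρ (Set.Iio c) = ENNReal.ofReal (1 - Real.exp (-(μ * c))) :=
    fun c hc => by rw [hρdef, expMeasure_Iio hμ, if_pos hc]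
  have hIio0 : ρ (Set.Iio 0) = 0 := by
    rw [hρdef, expMeasure_Iio hμ, if_pos le_rfl]; simp
  set ρ2 : Measure (ℝ × ℝ) := ρ.prod ρ with hρ2def
  haveI : IsProbabilityMeasure ρ2 := by rw [hρ2def]; infer_instance
  -- a.e. nonnegativity under ρ2
  have hae_Q : ∀ᵐ p ∂ρ2, 0 ≤ p.1 ∧ 0 ≤ p.2 := by
    rw [MeasureTheory.ae_iff]
    have hset : {p : ℝ × ℝ | ¬ (0 ≤ p.1 ∧ 0 ≤ p.2)}
        ⊆ (Set.Iio 0 ×ˢ Set.univ) ∪ (Set.univ ×ˢ Set.Iio 0) := by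
      intro p hp
      simp only [Set.mem_setOf_eq, not_and_or, not_le] at hp
      rcases hp with h | h
      · exact Or.inl ⟨h, trivial⟩
      · exact Or.inr ⟨trivial, h⟩
    refine measure_mono_null hset ?_
    refine le_antisymm (le_trans (measure_union_le _ _) ?_) zero_le
    rw [hρ2def, Measure.prod_prod, Measure.prod_prod, hIio0]
    simp
  have hcong : ∀ s t : Set (ℝ × ℝ),
      (∀ p : ℝ × ℝ, 0 ≤ p.1 → 0 ≤ p.2 → (p ∈ s ↔ p ∈ t)) → ρ2 s = ρ2 t := by
    intro s t h
    apply measure_congr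
    rw [Filter.eventuallyEq_set]
    filter_upwards [hae_Q] with p hp
    exact h p hp.1 hp.2
  have hmono' : ∀ i j, i ≤ j → j < n → xh i ≤ xh j := by
    intro i j hij hj
    rcases eq_or_lt_of_le hij with h | h
    · rw [h]
    · exact (hmono i j h hj).le
  -- the slice sets
  set slice : ℝ → Set (ℝ × ℝ) :=
    fun y => {p : ℝ × ℝ | ∀ i < n, ¬ (y - p.1 ≤ xh i ∧ xh i ≤ y + p.2)} with hslicedef
  have h0n : 0 < n := by omega
  have hslice1 : ∀ y : ℝ, y ≤ xh 0 → ρ2 (slice y) = ENNReal.ofReal (g y) := by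
    intro y hy
    have heq : ρ2 (slice y) = ρ2 (Set.univ ×ˢ Set.Iio (xh 0 - y)) := by
      apply hcong
      intro p hv hw
      simp only [hslicedef, Set.mem_setOf_eq, Set.mem_prod, Set.mem_univ, Set.mem_Iio, true_and]
      constructor
      · intro h
        have h0 := h 0 h0n
        push_neg at h0
        have h1 : y - p.1 ≤ xh 0 := by linarith
        linarith [h0 h1]
      · intro h i hi
        rintro ⟨h1, h2⟩
        have : xh 0 ≤ xh i := hmono' 0 i (Nat.zero_le i) hi
        linarith
    rw [heq, Measure.prod_prod, measure_univ, one_mul, hIio _ (by linarith), hg1 y hy]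
  have hslice3 : ∀ y : ℝ, xh (n - 1) ≤ y → ρ2 (slice y) = ENNReal.ofReal (g y) := by
    intro y hy
    have heq : ρ2 (slice y) = ρ2 (Set.Iio (y - xh (n - 1)) ×ˢ Set.univ) := by
      apply hcong
      intro p hv hw
      simp only [hslicedef, Set.mem_setOf_eq, Set.mem_prod, Set.mem_univ, Set.mem_Iio, and_true]
      constructor
      · intro h
        have h0 := h (n - 1) (by omega)
        push_neg at h0
        have h2 : xh (n - 1) ≤ y + p.2 := by linarith
        by_contra hc
        push_neg at hc
        linarith [h0 (by linarith)]
      · intro h i hi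
        rintro ⟨h1, h2⟩
        have : xh i ≤ xh (n - 1) := hmono' i (n - 1) (by omega) (by omega)
        linarith
    rw [heq, Measure.prod_prod, measure_univ, mul_one, hIio _ (by linarith), hg3 y hy]
  have hslice2 : ∀ k, 1 ≤ k → k < n → ∀ y, xh (k - 1) < y → y < xh k →
      ρ2 (slice y) = ENNReal.ofReal (g y) := by
    intro k hk1 hkn y hyl hyr
    have heq : ρ2 (slice y) = ρ2 (Set.Iio (y - xh (k - 1)) ×ˢ Set.Iio (xh k - y)) := by
      apply hcong
      intro p hv hw
      simp only [hslicedef, Set.mem_setOf_eq, Set.mem_prod, Set.mem_Iio]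
      constructor
      · intro h
        constructor
        · have h0 := h (k - 1) (by omega)
          push_neg at h0
          have h2 : xh (k - 1) ≤ y + p.2 := by linarith
          by_contra hc
          push_neg at hc
          linarith [h0 (by linarith)]
        · have h0 := h k hkn
          push_neg at h0
          have h1 : y - p.1 ≤ xh k := by linarith
          linarith [h0 h1]
      · rintro ⟨h1, h2⟩ i hi ⟨ha, hb⟩
        rcases lt_or_ge i k with hik | hki
        · have : xh i ≤ xh (k - 1) := hmono' i (k - 1) (by omega) (by omega)
          linarith
        · have : xh k ≤ xh i := hmono' k i hki hi
          linarith
    have hfac : 0 ≤ 1 - Real.exp (-(μ * (y - xh (k - 1)))) := by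
      have := exp_neg_le_one (a := y - xh (k - 1)) hμ (by linarith)
      linarith
    rw [heq, Measure.prod_prod, hIio _ (by linarith), hIio _ (by linarith),
      ← ENNReal.ofReal_mul hfac, hg2 k hk1 hkn y hyl hyr]
  -- trichotomy outside finite exceptional set
  set F : Set ℝ := xh '' {i : ℕ | i < n} with hFdef
  have hFfin : F.Finite := (Set.finite_Iio n).image xh
  have htri : ∀ y : ℝ, y ∉ F → y ≤ xh 0 ∨ xh (n - 1) ≤ y ∨
      ∃ k, 1 ≤ k ∧ k < n ∧ xh (k - 1) < y ∧ y < xh k := by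
    intro y hy
    rcases le_or_gt y (xh 0) with h0 | h0
    · exact Or.inl h0
    rcases le_or_gt (xh (n - 1)) y with hn' | hn'
    · exact Or.inr (Or.inl hn')
    refine Or.inr (Or.inr ?_)
    have hex : ∃ k, y < xh k := ⟨n - 1, hn'⟩
    set k := Nat.find hex with hkdef
    have hky : y < xh k := Nat.find_spec hex
    have hkle : k ≤ n - 1 := Nat.find_le hn'
    have hk1 : 1 ≤ k := by
      rcases Nat.eq_zero_or_pos k with h | h
      · rw [h] at hky; linarith
      · exact h
    have hlow : xh (k - 1) ≤ y := by
      have := Nat.find_min hex (m := k - 1) (by omega)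
      push_neg at this
      exact this
    have hlow' : xh (k - 1) < y := by
      rcases lt_or_eq_of_le hlow with h | h
      · exact h
      · exact absurd ⟨k - 1, by simp only [Set.mem_setOf_eq]; omega, h⟩ hy
    exact ⟨k, hk1, by omega, hlow', hky⟩
  have hslice_all : ∀ y : ℝ, y ∉ F → ρ2 (slice y) = ENNReal.ofReal (g y) := by
    intro y hy
    rcases htri y hy with h | h | ⟨k, hk1, hkn, hl, hr⟩
    · exact hslice1 y h
    · exact hslice3 y h
    · exact hslice2 k hk1 hkn y hl hr
  have hgbound : ∀ y : ℝ, y ∉ F → 0 ≤ g y ∧ g y ≤ 1 := by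
    intro y hy
    rcases htri y hy with h | h | ⟨k, hk1, hkn, hl, hr⟩
    · rw [hg1 y h]
      constructor
      · linarith [exp_neg_le_one (a := xh 0 - y) hμ (by linarith)]
      · linarith [Real.exp_pos (-(μ * (xh 0 - y)))]
    · rw [hg3 y h]
      constructor
      · linarith [exp_neg_le_one (a := y - xh (n - 1)) hμ (by linarith)]
      · linarith [Real.exp_pos (-(μ * (y - xh (n - 1))))]
    · rw [hg2 k hk1 hkn y hl hr]
      have e1 := exp_neg_le_one (a := y - xh (k - 1)) hμ (by linarith)
      have e2 := exp_neg_le_one (a := xh k - y) hμ (by linarith)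
      have p1 := Real.exp_pos (-(μ * (y - xh (k - 1))))
      have p2 := Real.exp_pos (-(μ * (xh k - y)))
      constructor
      · nlinarith
      · nlinarith

  -- the events A j
  set A : ℕ → Set Ω :=
    fun j => {ω | ∀ i < n, ¬ (Y j ω - V j ω ≤ xh i ∧ xh i ≤ Y j ω + W j ω)} with hAdef
  have hAset : ∀ j, A j = ⋂ i, ⋂ _ : i < n,
      ({ω | Y j ω - V j ω ≤ xh i} ∩ {ω | xh i ≤ Y j ω + W j ω})ᶜ := by
    intro j; ext ω
    simp only [hAdef, Set.mem_setOf_eq, Set.mem_iInter, Set.mem_compl_iff, Set.mem_inter_iff]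
  have hAmeas_of : ∀ (m' : MeasurableSpace Ω) (j : ℕ),
      Measurable[m'] (Y j) → Measurable[m'] (V j) → Measurable[m'] (W j) →
      MeasurableSet[m'] (A j) := by
    intro m' j hy hv hw
    rw [hAset]
    exact MeasurableSet.iInter fun i => MeasurableSet.iInter fun _ =>
      ((measurableSet_le (hy.sub hv) measurable_const).inter
        (measurableSet_le measurable_const (hy.add hw))).compl
  have hAmeas : ∀ j, MeasurableSet (A j) := fun j =>
    hAmeas_of _ j (hYmeas j) (hVmeas j) (hWmeas j)
  -- independence grouping
  set f := windowObstacleFun N Y V W with hfdef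
  have hfmeas : ∀ i, Measurable (f i) := by
    rintro (_ | ⟨j, k⟩)
    · exact hNmeas
    · fin_cases k
      · exact hYmeas j
      · exact hVmeas j
      · exact hWmeas j
  set 𝔪 : Option (ℕ × Fin 3) → MeasurableSpace Ω :=
    fun i => MeasurableSpace.comap (f i) inferInstance with h𝔪def
  have hI : iIndep 𝔪 P := hindep.iIndep
  have h_le : ∀ i, 𝔪 i ≤ (inferInstance : MeasurableSpace Ω) := fun i => (hfmeas i).comap_le
  set G : ℕ → Set (Option (ℕ × Fin 3)) :=
    fun j => {some (j, 0), some (j, 1), some (j, 2)} with hGdef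
  set S : ℕ → Set (Option (ℕ × Fin 3)) :=
    fun m => {none} ∪ ⋃ j < m, G j with hSdef
  set MG : ℕ → MeasurableSpace Ω := fun j => ⨆ i ∈ G j, 𝔪 i with hMGdef
  set MS : ℕ → MeasurableSpace Ω := fun m => ⨆ i ∈ S m, 𝔪 i with hMSdef
  have hmemG : ∀ j (c : Fin 3), (some (j, c)) ∈ G j := by
    intro j c; fin_cases c <;> simp [hGdef]
  have hcomap_le_MG : ∀ j (c : Fin 3), 𝔪 (some (j, c)) ≤ MG j := fun j c =>
    le_biSup 𝔪 (hmemG j c)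
  have hYMG : ∀ j, Measurable[MG j] (Y j) := fun j =>
    (comap_measurable (f (some (j, 0)))).mono (hcomap_le_MG j 0) le_rfl
  have hVMG : ∀ j, Measurable[MG j] (V j) := fun j =>
    (comap_measurable (f (some (j, 1)))).mono (hcomap_le_MG j 1) le_rfl
  have hWMG : ∀ j, Measurable[MG j] (W j) := fun j =>
    (comap_measurable (f (some (j, 2)))).mono (hcomap_le_MG j 2) le_rfl
  have hA_MG : ∀ j, MeasurableSet[MG j] (A j) := fun j =>
    hAmeas_of (MG j) j (hYMG j) (hVMG j) (hWMG j)
  have hMG_le_MS : ∀ j m, j < m → MG j ≤ MS m := by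
    intro j m hjm
    refine iSup₂_le fun i hi => le_biSup 𝔪 ?_
    exact Set.mem_union_right _ (Set.mem_biUnion hjm hi)
  have hN_MS : ∀ m k, MeasurableSet[MS m] (N ⁻¹' {k}) := by
    intro m k
    have h1 : 𝔪 none ≤ MS m := le_biSup 𝔪 (Set.mem_union_left _ rfl)
    exact h1 _ ⟨{k}, measurableSet_singleton k, rfl⟩
  have hdisjSG : ∀ m, Disjoint (S m) (G m) := by
    intro m
    rw [Set.disjoint_left]
    rintro i hiS hiG
    have hic : ∃ c : Fin 3, i = some (m, c) := by
      simp only [hGdef, Set.mem_insert_iff, Set.mem_singleton_iff] at hiG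
      rcases hiG with h | h | h
      exacts [⟨0, h⟩, ⟨1, h⟩, ⟨2, h⟩]
    obtain ⟨c, rfl⟩ := hic
    simp only [hSdef, Set.mem_union, Set.mem_singleton_iff, Set.mem_iUnion] at hiS
    rcases hiS with h | ⟨j, hj, hjG⟩
    · exact nomatch h
    · simp only [hGdef, Set.mem_insert_iff, Set.mem_singleton_iff, Option.some.injEq,
        Prod.mk.injEq] at hjG
      rcases hjG with ⟨h, _⟩ | ⟨h, _⟩ | ⟨h, _⟩ <;> omega
  have hIndepStep : ∀ m, Indep (MS m) (MG m) P :=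
    fun m => indep_iSup_of_disjoint h_le hI (hdisjSG m)
  have hkey : ∀ m k, P (N ⁻¹' {m} ∩ ⋂ j ∈ Finset.range k, A j)
      = P (N ⁻¹' {m}) * ∏ j ∈ Finset.range k, P (A j) := by
    intro m k
    induction k with
    | zero => simp
    | succ k ih =>
      have hB : MeasurableSet[MS k] (N ⁻¹' {m} ∩ ⋂ j ∈ Finset.range k, A j) := by
        refine (hN_MS k m).inter ?_
        refine MeasurableSet.iInter fun j => MeasurableSet.iInter fun hj => ?_
        exact hMG_le_MS j k (Finset.mem_range.1 hj) _ (hA_MG j)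
      have hstep := (Indep_iff _ _ _).1 (hIndepStep k) _ _ hB (hA_MG k)
      have hrw : N ⁻¹' {m} ∩ ⋂ j ∈ Finset.range (k + 1), A j
          = (N ⁻¹' {m} ∩ ⋂ j ∈ Finset.range k, A j) ∩ A k := by
        rw [Finset.range_add_one]
        ext ω
        simp only [Set.mem_inter_iff, Set.mem_iInter, Finset.mem_insert, Finset.mem_range]
        constructor
        · rintro ⟨h1, h2⟩
          exact ⟨⟨h1, fun j hj => h2 j (Or.inr hj)⟩, h2 k (Or.inl rfl)⟩
        · rintro ⟨⟨h1, h2⟩, h3⟩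
          refine ⟨h1, fun j hj => ?_⟩
          rcases hj with rfl | hj
          · exact h3
          · exact h2 j hj
      rw [hrw, hstep, ih, Finset.prod_range_succ, mul_assoc]
  -- distribution of a single obstacle triple
  set unif : Measure ℝ :=
    (ENNReal.ofReal L)⁻¹ • volume.restrict (Set.Icc (-(L / 2)) (L / 2)) with hunifdef
  have hLne : ENNReal.ofReal L ≠ 0 := by
    rw [Ne, ENNReal.ofReal_eq_zero]; linarith
  haveI hunifprob : IsProbabilityMeasure unif := by
    constructor
    rw [hunifdef, Measure.smul_apply, Measure.restrict_apply_univ, Real.volume_Icc,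
      smul_eq_mul, show L / 2 - -(L / 2) = L by ring]
    exact ENNReal.inv_mul_cancel hLne ENNReal.ofReal_ne_top
  set SS : Set (ℝ × ℝ × ℝ) :=
    {q : ℝ × ℝ × ℝ | ∀ i < n, ¬ (q.1 - q.2.1 ≤ xh i ∧ xh i ≤ q.1 + q.2.2)} with hSSdef
  have hSSmeas : MeasurableSet SS := by
    have hSSeq : SS = ⋂ i, ⋂ _ : i < n,
        ({q : ℝ × ℝ × ℝ | q.1 - q.2.1 ≤ xh i} ∩ {q : ℝ × ℝ × ℝ | xh i ≤ q.1 + q.2.2})ᶜ := by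
      ext q
      simp only [hSSdef, Set.mem_setOf_eq, Set.mem_iInter, Set.mem_compl_iff, Set.mem_inter_iff]
    rw [hSSeq]
    exact MeasurableSet.iInter fun i => MeasurableSet.iInter fun _ =>
      ((measurableSet_le (measurable_fst.sub measurable_snd.fst) measurable_const).inter
        (measurableSet_le measurable_const (measurable_fst.add measurable_snd.snd))).compl
  have hpairmeas : ∀ j, Measurable (fun ω => (V j ω, W j ω)) := fun j =>
    (hVmeas j).prodMk (hWmeas j)
  have hmapVW : ∀ j, Measure.map (fun ω => (V j ω, W j ω)) P = ρ.prod ρ := by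
    intro j
    have hvw : IndepFun (V j) (W j) P :=
      hindep.indepFun (i := some (j, 1)) (j := some (j, 2)) (by simp)
    have h := (indepFun_iff_map_prod_eq_prod_map_map (hVmeas j).aemeasurable
      (hWmeas j).aemeasurable).1 hvw
    rw [h, hV j, hW j]
  have hmapT : ∀ j, Measure.map (fun ω => (Y j ω, (V j ω, W j ω))) P = unif.prod ρ2 := by
    intro j
    have hyp : IndepFun (Y j) (fun ω => (V j ω, W j ω)) P :=
      (hindep.indepFun_prodMk hfmeas (some (j, 1)) (some (j, 2)) (some (j, 0))
        (by simp) (by simp)).symm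
    have h := (indepFun_iff_map_prod_eq_prod_map_map (hYmeas j).aemeasurable
      (hpairmeas j).aemeasurable).1 hyp
    rw [h, hY j, hmapVW j]
  have hAj_pre : ∀ j, A j = (fun ω => (Y j ω, (V j ω, W j ω))) ⁻¹' SS := fun j => rfl
  have hPA : ∀ j, P (A j) = (unif.prod ρ2) SS := by
    intro j
    rw [hAj_pre j, ← Measure.map_apply ((hYmeas j).prodMk (hpairmeas j)) hSSmeas, hmapT j]
  have hprodapply : (unif.prod ρ2) SS = ∫⁻ y, ρ2 (slice y) ∂unif := by
    rw [Measure.prod_apply hSSmeas]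
    rfl
  have hFvol : volume F = 0 := hFfin.measure_zero _
  have hFunif : unif F = 0 := by
    rw [hunifdef, Measure.smul_apply, smul_eq_mul]
    have hr : volume.restrict (Set.Icc (-(L / 2)) (L / 2)) F = 0 :=
      le_antisymm ((Measure.restrict_apply_le _ _).trans hFvol.le) zero_le
    rw [hr, mul_zero]
  have haeunif : ∀ᵐ y ∂unif, y ∉ F := by
    rw [MeasureTheory.ae_iff]
    simpa only [not_not, Set.setOf_mem_eq] using hFunif
  have hlint : ∫⁻ y, ρ2 (slice y) ∂unif = ∫⁻ y, ENNReal.ofReal (g y) ∂unif := by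
    apply lintegral_congr_ae
    filter_upwards [haeunif] with y hy
    exact hslice_all y hy
  -- real integral facts
  set ms : Measure ℝ := volume.restrict (Set.Icc (-(L / 2)) (L / 2)) with hmsdef
  haveI hmsfin : IsFiniteMeasure ms := by
    constructor
    rw [hmsdef, Measure.restrict_apply_univ, Real.volume_Icc]
    exact ENNReal.ofReal_lt_top
  have hmsuniv : (ms Set.univ).toReal = L := by
    rw [hmsdef, Measure.restrict_apply_univ, Real.volume_Icc,
      ENNReal.toReal_ofReal (by linarith)]
    ring
  have hmsF : ms F = 0 :=
    le_antisymm ((Measure.restrict_apply_le _ _).trans hFvol.le) zero_le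
  have haems : ∀ᵐ y ∂ms, y ∉ F := by
    rw [MeasureTheory.ae_iff]
    simpa only [not_not, Set.setOf_mem_eq] using hmsF
  have hmeas_slice : Measurable (fun y => ρ2 (slice y)) :=
    measurable_measure_prodMk_left (ν := ρ2) hSSmeas
  have haesm : AEStronglyMeasurable g ms := by
    refine (hmeas_slice.ennreal_toReal.aestronglyMeasurable (μ := ms)).congr ?_
    filter_upwards [haems] with y hy
    rw [hslice_all y hy, ENNReal.toReal_ofReal (hgbound y hy).1]
  have hgint : Integrable g ms := by
    refine Integrable.mono' (integrable_const 1) haesm ?_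
    filter_upwards [haems] with y hy
    rw [Real.norm_eq_abs, abs_le]
    exact ⟨by linarith [(hgbound y hy).1], (hgbound y hy).2⟩
  set Gr : ℝ := ∫ y, g y ∂ms with hGrdef
  have hGr0 : 0 ≤ Gr := by
    rw [hGrdef]
    apply integral_nonneg_of_ae
    filter_upwards [haems] with y hy
    exact (hgbound y hy).1
  have hGrL : Gr ≤ L := by
    have h1 : Gr ≤ ∫ _, (1 : ℝ) ∂ms := by
      rw [hGrdef]
      apply integral_mono_ae hgint (integrable_const 1)
      filter_upwards [haems] with y hy
      exact (hgbound y hy).2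
    rw [integral_const, smul_eq_mul, mul_one, measureReal_def, hmsuniv] at h1
    exact h1
  have hofRealGr : ENNReal.ofReal Gr = ∫⁻ y, ENNReal.ofReal (g y) ∂ms := by
    rw [hGrdef]
    refine ofReal_integral_eq_lintegral_ofReal hgint ?_
    filter_upwards [haems] with y hy
    exact (hgbound y hy).1
  have hPAval : ∀ j, P (A j) = ENNReal.ofReal (Gr / L) := by
    intro j
    rw [hPA j, hprodapply, hlint, hunifdef, lintegral_smul_measure, ← hofRealGr,
      ENNReal.ofReal_div_of_pos hL, div_eq_mul_inv, mul_comm, smul_eq_mul]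
  -- the interval integral
  have hab : -(L / 2) ≤ L / 2 := by linarith
  have hintval : (∫ y in -(L / 2)..(L / 2), (1 - g y)) = L - Gr := by
    rw [intervalIntegral.integral_of_le hab]
    have hms' : volume.restrict (Set.Ioc (-(L / 2)) (L / 2)) = ms := by
      rw [hmsdef]
      exact Measure.restrict_congr_set Ioc_ae_eq_Icc
    rw [hms', integral_sub (integrable_const 1) hgint, integral_const, smul_eq_mul,
      mul_one, measureReal_def, hmsuniv, ← hGrdef]
  -- the Poisson sum
  set r : NNReal := (lam * L).toNNReal with hrdef
  have hrr : (r : ℝ) = lam * L := Real.coe_toNNReal _ (by positivity)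
  have hPN : ∀ m : ℕ, P (N ⁻¹' {m}) = ENNReal.ofReal (poissonPMFReal r m) := by
    intro m
    rw [← Measure.map_apply hNmeas (measurableSet_singleton m), hN]
    have h1 : poissonMeasure r {m} = ENNReal.ofReal (poissonPMFReal r m) :=
      poissonMeasure_singleton r m
    rw [h1]
  set q : ℝ := Gr / L with hqdef
  have hq0 : 0 ≤ q := by positivity
  have hq1 : q ≤ 1 := by rw [hqdef, div_le_one hL]; exact hGrL
  have hEeq : {ω | ∀ j < N ω, ∀ i < n, ¬ (Y j ω - V j ω ≤ xh i ∧ xh i ≤ Y j ω + W j ω)}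
      = ⋃ m, (N ⁻¹' {m} ∩ ⋂ j ∈ Finset.range m, A j) := by
    ext ω
    simp only [Set.mem_setOf_eq, Set.mem_iUnion, Set.mem_inter_iff, Set.mem_preimage,
      Set.mem_singleton_iff, Set.mem_iInter, Finset.mem_range]
    constructor
    · intro h
      exact ⟨N ω, rfl, fun j hj => h j hj⟩
    · rintro ⟨m, hm, h⟩ j hj
      exact h j (by omega)
  have hdisjE : Pairwise (Function.onFun Disjoint
      fun m => N ⁻¹' {m} ∩ ⋂ j ∈ Finset.range m, A j) := by
    intro m m' hmm'
    simp only [Function.onFun]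
    rw [Set.disjoint_left]
    rintro ω ⟨h1, _⟩ ⟨h2, _⟩
    exact hmm' ((Set.mem_singleton_iff.mp h1).symm.trans (Set.mem_singleton_iff.mp h2))
  have hmeasE : ∀ m : ℕ, MeasurableSet (N ⁻¹' {m} ∩ ⋂ j ∈ Finset.range m, A j) := fun m =>
    (hNmeas (measurableSet_singleton m)).inter
      (MeasurableSet.iInter fun j => MeasurableSet.iInter fun _ => hAmeas j)
  rw [hEeq, measure_iUnion hdisjE hmeasE]
  have hterm : ∀ m : ℕ, P (N ⁻¹' {m} ∩ ⋂ j ∈ Finset.range m, A j)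
      = ENNReal.ofReal (poissonPMFReal r m * q ^ m) := by
    intro m
    rw [hkey m m, hPN m]
    have hp : ∏ j ∈ Finset.range m, P (A j) = ENNReal.ofReal q ^ m := by
      rw [Finset.prod_congr rfl fun j _ => hPAval j, Finset.prod_const, Finset.card_range]
    rw [hp, ← ENNReal.ofReal_pow hq0, ← ENNReal.ofReal_mul poissonPMFReal_nonneg]
  rw [tsum_congr hterm]
  have heqfun : (fun m : ℕ => poissonPMFReal r m * q ^ m)
      = fun m => Real.exp (-(r : ℝ)) * (((r : ℝ) * q) ^ m / m.factorial) := by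
    funext m
    rw [poissonPMFReal, mul_pow]
    ring
  have hsummable : Summable fun m : ℕ => poissonPMFReal r m * q ^ m := by
    rw [heqfun]
    exact (Real.summable_pow_div_factorial ((r : ℝ) * q)).mul_left _
  rw [← ENNReal.ofReal_tsum_of_nonneg
    (fun m => mul_nonneg poissonPMFReal_nonneg (pow_nonneg hq0 m)) hsummable]
  congr 1
  have hts : (∑' m : ℕ, poissonPMFReal r m * q ^ m)
      = Real.exp (-(r : ℝ)) * Real.exp ((r : ℝ) * q) := by
    rw [heqfun, tsum_mul_left]
    congr 1
    rw [Real.exp_eq_exp_ℝ]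
    exact (NormedSpace.expSeries_div_hasSum_exp ((r : ℝ) * q)).tsum_eq
  rw [hts, ← Real.exp_add, hintval]
  congr 1
  rw [hrr, hqdef]
  field_simp
  ring
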